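/- Let p ∈ [0,1], K ≥ 1 an integer, λ_k = (k - 1/2)/K for k = 1,...,K, and q_1,...,q_K ∈ [0,1]. Define r_k = (1-q_k)(p - λ_k) if λ_k ≤ p and r_k = q_k(λ_k - p) otherwise, R = (1/K)·Σ r_k, and p̂ = (1/K)·Σ q_k. Then R ≥ (p̂ - p)²/2 - 1/(8K²). -/

import Mathlib

open Finset

private lemma sumA (a n : ℕ) :
    ∑ k ∈ Finset.Icc (a+1) (a+n), ((k:ℝ) - a) = n * (n + 1) / 2 := by
  induction n with
  | zero => simp
  | succ n ih =>
    rw [show a + (n+1) = (a + n) + 1 by omega,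
      Finset.sum_Icc_succ_top (by omega), ih]
    push_cast; ring

private lemma sumB (a n : ℕ) :
    ∑ k ∈ Finset.Icc (a+1) (a+n), (((a:ℝ) + n + 1) - k) = n * (n + 1) / 2 := by
  have hcard : (Finset.Icc (a+1) (a+n)).card = n := by
    rw [Nat.card_Icc]; omega
  have h1 := sumA a n
  have h2 : ∑ k ∈ Finset.Icc (a+1) (a+n), (((a:ℝ) + n + 1) - k)
      = ∑ k ∈ Finset.Icc (a+1) (a+n), (((n:ℝ) + 1) - ((k:ℝ) - a)) := by
    refine Finset.sum_congr rfl fun k _ => by ring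
  rw [h2, Finset.sum_sub_distrib, h1, Finset.sum_const, hcard, nsmul_eq_mul]
  ring

set_option maxHeartbeats 1600000 in
/-- Threshold-betting regret lower bound: R ≥ (p̂ - p)²/2 - 1/(8K²). -/
theorem stmt_10 (K : ℕ) (hK : 1 ≤ K) (p : ℝ) (hp : p ∈ Set.Icc (0:ℝ) 1)
    (q : ℕ → ℝ) (hq : ∀ k, q k ∈ Set.Icc (0:ℝ) 1)
    (lam r : ℕ → ℝ) (R phat : ℝ)
    (hlam : ∀ k, lam k = ((k : ℝ) - 1/2) / K)
    (hr : ∀ k, r k = if lam k ≤ p then (1 - q k) * (p - lam k) else q k * (lam k - p))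
    (hR : R = (1 / K) * ∑ k ∈ Finset.Icc 1 K, r k)
    (hphat : phat = (1 / K) * ∑ k ∈ Finset.Icc 1 K, q k) :
    (phat - p)^2 / 2 - 1 / (8 * K^2) ≤ R := by
  obtain ⟨hp0, hp1⟩ := hp
  have hK0 : (0:ℝ) < K := by exact_mod_cast Nat.lt_of_lt_of_le Nat.zero_lt_one hK
  set m : ℕ := ⌊(K:ℝ) * p + 1/2⌋₊ with hm
  have hKp0 : (0:ℝ) ≤ (K:ℝ) * p + 1/2 := by positivity
  have hchar : ∀ k : ℕ, (lam k ≤ p ↔ k ≤ m) := by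
    intro k
    rw [hlam k, div_le_iff₀ hK0, hm, Nat.le_floor_iff hKp0, mul_comm p (K:ℝ)]
    constructor <;> intro h <;> linarith
  set c : ℕ → ℝ := fun k => q k - (if k ≤ m then 1 else 0) with hc
  have hcle : ∀ k, k ≤ m → c k = q k - 1 := by
    intro k h; simp only [hc, if_pos h]
  have hcgt : ∀ k, ¬ k ≤ m → c k = q k := by
    intro k h; simp only [hc, if_neg h]; ring
  have hrc : ∀ k, r k = c k * (lam k - p) := by
    intro k
    rw [hr k]
    by_cases h : lam k ≤ p
    · rw [if_pos h, hcle k ((hchar k).1 h)]; ring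
    · rw [if_neg h, hcgt k (fun h' => h ((hchar k).2 h'))]
  have hmK : m ≤ K := by
    have h1 : (K:ℝ) * p + 1/2 < (K:ℝ) + 1 := by nlinarith
    have h2 : m < K + 1 := by
      rw [hm, Nat.floor_lt hKp0]; push_cast; linarith
    omega
  have hsum_ind : ∑ k ∈ Finset.Icc 1 K, (if k ≤ m then (1:ℝ) else 0) = m := by
    have h1 : ∀ k ∈ Finset.Icc 1 K,
        (if k ≤ m then (1:ℝ) else 0) = if k ∈ Finset.Icc 1 m then 1 else 0 := by
      intro k hk
      rw [Finset.mem_Icc] at hk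
      by_cases h : k ≤ m
      · rw [if_pos h, if_pos (Finset.mem_Icc.mpr ⟨hk.1, h⟩)]
      · rw [if_neg h, if_neg (fun h' => h (Finset.mem_Icc.mp h').2)]
    rw [Finset.sum_congr rfl h1, Finset.sum_ite_mem,
      Finset.inter_eq_right.mpr (Finset.Icc_subset_Icc_right hmK),
      Finset.sum_const, Nat.card_Icc, nsmul_eq_mul]
    simp
  set b : ℝ := (∑ k ∈ Finset.Icc 1 K, q k) - m with hb
  set u : ℝ := (K:ℝ) * p - m with hu
  have hu1 : -(1/2) ≤ u := by
    have := Nat.floor_le hKp0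
    rw [← hm] at this
    rw [hu]; linarith
  have hu2 : u ≤ 1/2 := by
    have := Nat.lt_floor_add_one ((K:ℝ) * p + 1/2)
    rw [← hm] at this
    rw [hu]; linarith
  have hsumc : ∑ k ∈ Finset.Icc 1 K, c k = b := by
    rw [hb, show (fun k => c k) = fun k => q k - (if k ≤ m then (1:ℝ) else 0) from hc]
    rw [Finset.sum_sub_distrib, hsum_ind]
  have hq0 : ∀ k, 0 ≤ q k := fun k => (hq k).1
  have hq1 : ∀ k, q k ≤ 1 := fun k => (hq k).2
  have huu : u * u ≤ 1/4 := by nlinarith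
  -- the main estimate
  have hmain : ((b - u)^2/2 - 1/8) / K ≤ ∑ k ∈ Finset.Icc 1 K, c k * (lam k - p) := by
    rcases le_or_gt 0 b with hbpos | hbneg
    · -- case b ≥ 0 : threshold at lam (m+n+1)
      set n : ℕ := ⌊b⌋₊ with hn
      have hn1 : (n:ℝ) ≤ b := Nat.floor_le hbpos
      have hn2 : b < n + 1 := Nat.lt_floor_add_one b
      set T : ℝ := ((m:ℝ) + n + 1/2) / K with hT
      have hlamT : ∀ k : ℕ, lam k - T = ((k:ℝ) - m - n - 1) / K := by
        intro k; rw [hlam k, hT]; ring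
      have hdecomp : ∑ k ∈ Finset.Icc 1 K, c k * (lam k - p)
          = (T - p) * b + ∑ k ∈ Finset.Icc 1 K, c k * (lam k - T) := by
        rw [← hsumc, Finset.mul_sum, ← Finset.sum_add_distrib]
        exact Finset.sum_congr rfl fun k _ => by ring
      have hpen : ∀ k ∈ Finset.Icc 1 K,
          -(if k ∈ Finset.Icc (m+1) (m+n) then T - lam k else 0) ≤ c k * (lam k - T) := by
        intro k hk
        rw [Finset.mem_Icc] at hk
        by_cases hkm : k ≤ m
        · have hnot : k ∉ Finset.Icc (m+1) (m+n) := by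
            rw [Finset.mem_Icc]; omega
          rw [if_neg hnot, neg_zero, hcle k hkm]
          have hkr : (k:ℝ) ≤ m := Nat.cast_le.mpr hkm
          have hy : lam k - T ≤ 0 := by
            rw [hlamT k]
            apply div_nonpos_of_nonpos_of_nonneg _ hK0.le
            
            linarith [Nat.cast_nonneg (α := ℝ) n]
          nlinarith [mul_nonneg (by linarith [hq1 k] : (0:ℝ) ≤ 1 - q k) (by linarith : (0:ℝ) ≤ T - lam k)]
        · rw [hcgt k hkm]
          by_cases hkn : k ≤ m + n
          · have hmem : k ∈ Finset.Icc (m+1) (m+n) := by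
              rw [Finset.mem_Icc]; omega
            rw [if_pos hmem]
            have hkr : (k:ℝ) ≤ (m:ℝ) + n := by
              have := Nat.cast_le (α := ℝ).mpr hkn
              push_cast at this; linarith
            have hy : lam k - T ≤ 0 := by
              rw [hlamT k]
              apply div_nonpos_of_nonpos_of_nonneg _ hK0.le
              linarith
            nlinarith [mul_nonneg (by linarith [hq1 k] : (0:ℝ) ≤ 1 - q k) (by linarith : (0:ℝ) ≤ T - lam k)]
          · have hnot : k ∉ Finset.Icc (m+1) (m+n) := by
              rw [Finset.mem_Icc]; omega
            rw [if_neg hnot, neg_zero]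
            have hkr : (m:ℝ) + n + 1 ≤ (k:ℝ) := by
              have : m + n + 1 ≤ k := by omega
              have := Nat.cast_le (α := ℝ).mpr this
              push_cast at this; linarith
            have hy : 0 ≤ lam k - T := by
              rw [hlamT k]
              apply div_nonneg _ hK0.le
              linarith
            exact mul_nonneg (hq0 k) hy
      have hpen_sum : ∑ k ∈ Finset.Icc 1 K,
          (if k ∈ Finset.Icc (m+1) (m+n) then T - lam k else 0) ≤ (n:ℝ) * (n+1) / 2 / K := by
        rw [Finset.sum_ite_mem]
        have hnonneg : ∀ k ∈ Finset.Icc (m+1) (m+n), 0 ≤ T - lam k := by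
          intro k hk
          rw [Finset.mem_Icc] at hk
          have hkr : (k:ℝ) ≤ (m:ℝ) + n := by
            have := Nat.cast_le (α := ℝ).mpr hk.2
            push_cast at this; linarith
          have := hlamT k
          have : T - lam k = (((m:ℝ) + n + 1) - k) / K := by
            rw [hT, hlam k]; ring
          rw [this]
          apply div_nonneg _ hK0.le; linarith
        calc ∑ k ∈ Finset.Icc 1 K ∩ Finset.Icc (m+1) (m+n), (T - lam k)
            ≤ ∑ k ∈ Finset.Icc (m+1) (m+n), (T - lam k) :=
              Finset.sum_le_sum_of_subset_of_nonneg Finset.inter_subset_right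
                (fun k hk _ => hnonneg k hk)
          _ = (n:ℝ) * (n+1) / 2 / K := by
              have h3 : ∀ k ∈ Finset.Icc (m+1) (m+n),
                  T - lam k = (((m:ℝ) + n + 1) - k) * (1/K) := by
                intro k _; rw [hT, hlam k]; ring
              rw [Finset.sum_congr rfl h3, ← Finset.sum_mul, sumB m n]; ring
      have hsum2 : -((n:ℝ) * (n+1) / 2 / K) ≤ ∑ k ∈ Finset.Icc 1 K, c k * (lam k - T) := by
        have h := Finset.sum_le_sum hpen
        rw [Finset.sum_neg_distrib] at h
        linarith
      have hTp : T - p = ((n:ℝ) + 1/2 - u) / K := by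
        rw [hT, hu]; field_simp; ring
      have key : (b - u)^2 / 2 - 1/8 ≤ ((n:ℝ) + 1/2 - u) * b - (n:ℝ) * (n+1) / 2 := by
        nlinarith [mul_nonneg (by linarith : (0:ℝ) ≤ b - n) (by linarith : (0:ℝ) ≤ (n:ℝ) + 1 - b)]
      calc ((b - u)^2/2 - 1/8) / K
          ≤ (((n:ℝ) + 1/2 - u) * b - (n:ℝ) * (n+1) / 2) / K :=
            (div_le_div_iff_of_pos_right hK0).mpr key
        _ = (T - p) * b + (-((n:ℝ) * (n+1) / 2 / K)) := by rw [hTp]; ring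
        _ ≤ (T - p) * b + ∑ k ∈ Finset.Icc 1 K, c k * (lam k - T) := by linarith
        _ = ∑ k ∈ Finset.Icc 1 K, c k * (lam k - p) := hdecomp.symm
    · -- case b < 0 : threshold at lam (m-n)
      set n : ℕ := ⌊-b⌋₊ with hn
      have hn1 : (n:ℝ) ≤ -b := Nat.floor_le (by linarith)
      have hn2 : -b < n + 1 := Nat.lt_floor_add_one (-b)
      have hqsum_nonneg : 0 ≤ ∑ k ∈ Finset.Icc 1 K, q k :=
        Finset.sum_nonneg fun k _ => hq0 k
      have hnm : n ≤ m := by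
        have h1 : -b ≤ (m:ℝ) := by rw [hb]; linarith
        have h2 : (n:ℝ) ≤ (m:ℝ) := le_trans hn1 h1
        exact_mod_cast h2
      set a : ℕ := m - n with ha
      have hma : m = a + n := by omega
      have hacast : (a:ℝ) = (m:ℝ) - n := by
        rw [ha, Nat.cast_sub hnm]
      set T : ℝ := ((m:ℝ) - n - 1/2) / K with hT
      have hlamT : ∀ k : ℕ, lam k - T = ((k:ℝ) - m + n) / K := by
        intro k; rw [hlam k, hT]; ring
      have hdecomp : ∑ k ∈ Finset.Icc 1 K, c k * (lam k - p)
          = (T - p) * b + ∑ k ∈ Finset.Icc 1 K, c k * (lam k - T) := by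
        rw [← hsumc, Finset.mul_sum, ← Finset.sum_add_distrib]
        exact Finset.sum_congr rfl fun k _ => by ring
      have hpen : ∀ k ∈ Finset.Icc 1 K,
          -(if k ∈ Finset.Icc (a+1) m then lam k - T else 0) ≤ c k * (lam k - T) := by
        intro k hk
        rw [Finset.mem_Icc] at hk
        by_cases hkm : k ≤ m
        · rw [hcle k hkm]
          by_cases hka : a + 1 ≤ k
          · have hmem : k ∈ Finset.Icc (a+1) m := by
              rw [Finset.mem_Icc]; exact ⟨hka, hkm⟩
            rw [if_pos hmem]
            have hkr : (m:ℝ) - n + 1 ≤ (k:ℝ) := by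
              have : m - n + 1 ≤ k := by omega
              have := Nat.cast_le (α := ℝ).mpr this
              push_cast [Nat.cast_sub hnm] at this; linarith
            have hy : 0 ≤ lam k - T := by
              rw [hlamT k]
              apply div_nonneg _ hK0.le; linarith
            nlinarith [mul_nonneg (hq0 k) hy]
          · have hnot : k ∉ Finset.Icc (a+1) m := by
              rw [Finset.mem_Icc]; omega
            rw [if_neg hnot, neg_zero]
            have hkr : (k:ℝ) ≤ (m:ℝ) - n := by
              have : k ≤ m - n := by omega
              have := Nat.cast_le (α := ℝ).mpr this
              rw [Nat.cast_sub hnm] at this; linarith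
            have hy : lam k - T ≤ 0 := by
              rw [hlamT k]
              apply div_nonpos_of_nonpos_of_nonneg _ hK0.le
              linarith
            nlinarith [mul_nonneg (by linarith [hq1 k] : (0:ℝ) ≤ 1 - q k) (by linarith : (0:ℝ) ≤ T - lam k)]
        · have hnot : k ∉ Finset.Icc (a+1) m := by
            rw [Finset.mem_Icc]; omega
          rw [if_neg hnot, neg_zero, hcgt k hkm]
          have hkr : (m:ℝ) + 1 ≤ (k:ℝ) := by
            have : m + 1 ≤ k := by omega
            have := Nat.cast_le (α := ℝ).mpr this
            push_cast at this; linarith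
          have hy : 0 ≤ lam k - T := by
            rw [hlamT k]
            apply div_nonneg _ hK0.le
            linarith [Nat.cast_nonneg (α := ℝ) n]
          exact mul_nonneg (hq0 k) hy
      have hpen_sum : ∑ k ∈ Finset.Icc 1 K,
          (if k ∈ Finset.Icc (a+1) m then lam k - T else 0) ≤ (n:ℝ) * (n+1) / 2 / K := by
        rw [Finset.sum_ite_mem]
        have hnonneg : ∀ k ∈ Finset.Icc (a+1) m, 0 ≤ lam k - T := by
          intro k hk
          rw [Finset.mem_Icc] at hk
          have hkr : (m:ℝ) - n + 1 ≤ (k:ℝ) := by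
            have : m - n + 1 ≤ k := by omega
            have := Nat.cast_le (α := ℝ).mpr this
            push_cast [Nat.cast_sub hnm] at this; linarith
          rw [hlamT k]
          apply div_nonneg _ hK0.le; linarith
        calc ∑ k ∈ Finset.Icc 1 K ∩ Finset.Icc (a+1) m, (lam k - T)
            ≤ ∑ k ∈ Finset.Icc (a+1) m, (lam k - T) :=
              Finset.sum_le_sum_of_subset_of_nonneg Finset.inter_subset_right
                (fun k hk _ => hnonneg k hk)
          _ = (n:ℝ) * (n+1) / 2 / K := by
              have h3 : ∀ k ∈ Finset.Icc (a+1) m,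
                  lam k - T = ((k:ℝ) - a) * (1/K) := by
                intro k _; rw [hlam k, hT, hacast]; ring
              rw [Finset.sum_congr rfl h3, ← Finset.sum_mul]
              rw [show Finset.Icc (a+1) m = Finset.Icc (a+1) (a+n) from by rw [hma]]
              rw [sumA a n]; ring
      have hsum2 : -((n:ℝ) * (n+1) / 2 / K) ≤ ∑ k ∈ Finset.Icc 1 K, c k * (lam k - T) := by
        have h := Finset.sum_le_sum hpen
        rw [Finset.sum_neg_distrib] at h
        linarith
      have hTp : T - p = (-(n:ℝ) - 1/2 - u) / K := by
        rw [hT, hu]; field_simp; ring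
      have key : (b - u)^2 / 2 - 1/8 ≤ (-(n:ℝ) - 1/2 - u) * b - (n:ℝ) * (n+1) / 2 := by
        nlinarith [mul_nonneg (by linarith : (0:ℝ) ≤ -b - n) (by linarith : (0:ℝ) ≤ (n:ℝ) + 1 + b)]
      calc ((b - u)^2/2 - 1/8) / K
          ≤ ((-(n:ℝ) - 1/2 - u) * b - (n:ℝ) * (n+1) / 2) / K :=
            (div_le_div_iff_of_pos_right hK0).mpr key
        _ = (T - p) * b + (-((n:ℝ) * (n+1) / 2 / K)) := by rw [hTp]; ring
        _ ≤ (T - p) * b + ∑ k ∈ Finset.Icc 1 K, c k * (lam k - T) := by linarith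
        _ = ∑ k ∈ Finset.Icc 1 K, c k * (lam k - p) := hdecomp.symm
  -- wrap up
  have hphat' : phat - p = (b - u) / K := by
    rw [hphat, hb, hu]
    field_simp
    ring
  have hRc : R = (1/K) * ∑ k ∈ Finset.Icc 1 K, c k * (lam k - p) := by
    rw [hR]
    exact congrArg _ (Finset.sum_congr rfl fun k _ => hrc k)
  rw [hRc, hphat']
  have h1 : (1/(K:ℝ)) * (((b - u)^2/2 - 1/8) / K)
      ≤ (1/K) * ∑ k ∈ Finset.Icc 1 K, c k * (lam k - p) :=
    mul_le_mul_of_nonneg_left hmain (by positivity)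
  have h2 : ((b - u)/K)^2/2 - 1/(8*(K:ℝ)^2) = (1/K) * (((b - u)^2/2 - 1/8) / K) := by
    field_simp
  linarith
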